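/- Let d ≥ 1, δ ∈ (0,1), T₀ > 0 and C_A > 0. Then there exist C > 0 and ε₀ ∈ (0,1] such that for every ε ∈ (0,ε₀], every continuous Â : [0,T₀] → ℓ¹_{1−δ}(ℤ^d) with sup_{T∈[0,T₀]} ‖Â(T)‖_{ℓ¹_{1−δ}} ≤ C_A, and every t ∈ [0, T₀/ε²]: ε³ Σ_{K∈ℤ^d, |εK + 2e₁| ≤ 1/10} |∫₀^t e^{λ(3e₁+εK)(t−τ)} (Â * Â * Â)(K, ε²τ) dτ| ≤ C ε^{2−δ}. -/

import Mathlib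

/-- The weight `(1 + |K|²)^{r/2}` on the lattice `ℤ^d`. -/
noncomputable def wt (d : ℕ) (r : ℝ) (K : Fin d → ℤ) : ℝ :=
  (1 + ∑ i, ((K i : ℝ)) ^ 2) ^ (r / 2)

/-- Discrete convolution on `ℤ^d`: `(û * v̂)(K) = Σ_L û(K−L) v̂(L)`. -/
noncomputable def dconv (d : ℕ) (u v : (Fin d → ℤ) → ℂ) (K : Fin d → ℤ) : ℂ :=
  ∑' L : Fin d → ℤ, u (K - L) * v L

/-- Continuity of `T ↦ A(T)` on `[0,T₀]` with respect to the `ℓ¹_r` norm. -/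
def NormContOn (d : ℕ) (r T₀ : ℝ) (B : ℝ → (Fin d → ℤ) → ℂ) : Prop :=
  ∀ T ∈ Set.Icc (0 : ℝ) T₀, ∀ η > 0, ∃ ν > 0, ∀ T' ∈ Set.Icc (0 : ℝ) T₀,
    |T' - T| < ν → ∑' K : Fin d → ℤ, ‖B T' K - B T K‖ * wt d r K < η

open scoped ENNReal NNReal
open MeasureTheory

namespace CritAux

variable {d : ℕ} {r : ℝ}

lemma wt_nonneg (d : ℕ) (r : ℝ) (K : Fin d → ℤ) : 0 ≤ wt d r K :=
  Real.rpow_nonneg (by positivity) _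

lemma one_le_wt (hr : 0 ≤ r) (K : Fin d → ℤ) : 1 ≤ wt d r K := by
  have h1 : (1:ℝ) ≤ 1 + ∑ i, ((K i : ℝ)) ^ 2 := by
    have : (0:ℝ) ≤ ∑ i, ((K i : ℝ)) ^ 2 := by positivity
    linarith
  calc (1:ℝ) = 1 ^ (r/2) := (Real.one_rpow _).symm
    _ ≤ wt d r K := Real.rpow_le_rpow zero_le_one h1 (by linarith)

lemma wt_submul (hr0 : 0 ≤ r) (hr2 : r ≤ 2) (K L : Fin d → ℤ) :
    wt d r K ≤ 2 * (wt d r (K - L) * wt d r L) := by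
  set A := ∑ i, (((K - L) i : ℝ)) ^ 2 with hA
  set B := ∑ i, ((L i : ℝ)) ^ 2 with hB
  have hAn : 0 ≤ A := by positivity
  have hBn : 0 ≤ B := by positivity
  have hS : ∑ i, ((K i : ℝ)) ^ 2 ≤ 2 * A + 2 * B := by
    rw [hA, hB, Finset.mul_sum, Finset.mul_sum, ← Finset.sum_add_distrib]
    refine Finset.sum_le_sum fun i _ => ?_
    have : (K i : ℝ) = ((K - L) i : ℝ) + (L i : ℝ) := by
      simp [Pi.sub_apply]
    rw [this]; nlinarith [sq_nonneg (((K - L) i : ℝ) - (L i : ℝ))]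
  have hbase : 1 + ∑ i, ((K i : ℝ)) ^ 2 ≤ 2 * ((1 + A) * (1 + B)) := by nlinarith
  have h1 : wt d r K ≤ (2 * ((1 + A) * (1 + B))) ^ (r/2) :=
    Real.rpow_le_rpow (by positivity) hbase (by positivity)
  have h2 : (2 * ((1 + A) * (1 + B))) ^ (r/2)
      = 2 ^ (r/2) * ((1 + A) ^ (r/2) * (1 + B) ^ (r/2)) := by
    rw [Real.mul_rpow (by norm_num) (by positivity), Real.mul_rpow (by positivity) (by positivity)]
  have h3 : (2:ℝ) ^ (r/2) ≤ 2 := by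
    calc (2:ℝ) ^ (r/2) ≤ 2 ^ (1:ℝ) :=
      Real.rpow_le_rpow_of_exponent_le (by norm_num) (by linarith)
    _ = 2 := Real.rpow_one 2
  have h4 : wt d r (K - L) = (1 + A) ^ (r/2) := rfl
  have h5 : wt d r L = (1 + B) ^ (r/2) := rfl
  rw [h4, h5]
  calc wt d r K ≤ 2 ^ (r/2) * ((1 + A) ^ (r/2) * (1 + B) ^ (r/2)) := by rw [← h2]; exact h1
    _ ≤ 2 * ((1 + A) ^ (r/2) * (1 + B) ^ (r/2)) := by
        have : (0:ℝ) ≤ (1 + A) ^ (r/2) * (1 + B) ^ (r/2) := by positivity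
        exact mul_le_mul_of_nonneg_right h3 this

/-- ENNReal weight. -/
noncomputable def W (d : ℕ) (r : ℝ) (K : Fin d → ℤ) : ℝ≥0∞ := ENNReal.ofReal (wt d r K)

lemma key_conv_tsum (f g : (Fin d → ℤ) → ℝ≥0∞) :
    ∑' K : Fin d → ℤ, ∑' L : Fin d → ℤ, f (K - L) * g L
      = (∑' K : Fin d → ℤ, f K) * ∑' L : Fin d → ℤ, g L := by
  rw [ENNReal.tsum_comm]
  calc ∑' L, ∑' K, f (K - L) * g L
      = ∑' L : Fin d → ℤ, (∑' K : Fin d → ℤ, f (K - L)) * g L := by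
        simp [ENNReal.tsum_mul_right]
    _ = ∑' L : Fin d → ℤ, (∑' K : Fin d → ℤ, f K) * g L := by
        refine tsum_congr fun L => ?_
        congr 1
        exact (Equiv.subRight L).tsum_eq f
    _ = (∑' K : Fin d → ℤ, f K) * ∑' L : Fin d → ℤ, g L := ENNReal.tsum_mul_left

/-- pointwise: `‖dconv u v K‖₊ ≤ ∑' L, ‖u (K-L)‖₊ * ‖v L‖₊` in `ℝ≥0∞`. -/
lemma enorm_dconv_point_le (u v : (Fin d → ℤ) → ℂ) (K : Fin d → ℤ) :
    (‖dconv d u v K‖₊ : ℝ≥0∞) ≤ ∑' L : Fin d → ℤ, (‖u (K - L)‖₊ : ℝ≥0∞) * ‖v L‖₊ := by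
  by_cases hs : Summable (fun L : Fin d → ℤ => u (K - L) * v L)
  · have hns : Summable (fun L : Fin d → ℤ => ‖u (K - L) * v L‖) :=
      (summable_norm_iff).mpr hs
    have h1 : ‖dconv d u v K‖ ≤ ∑' L : Fin d → ℤ, ‖u (K - L) * v L‖ :=
      norm_tsum_le_tsum_norm hns
    calc (‖dconv d u v K‖₊ : ℝ≥0∞) = ENNReal.ofReal ‖dconv d u v K‖ :=
          (ofReal_norm _).symm
      _ ≤ ENNReal.ofReal (∑' L : Fin d → ℤ, ‖u (K - L) * v L‖) :=
          ENNReal.ofReal_le_ofReal h1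
      _ = ∑' L : Fin d → ℤ, ENNReal.ofReal ‖u (K - L) * v L‖ :=
          ENNReal.ofReal_tsum_of_nonneg (fun _ => norm_nonneg _) hns
      _ = ∑' L : Fin d → ℤ, (‖u (K - L)‖₊ : ℝ≥0∞) * ‖v L‖₊ := by
          refine tsum_congr fun L => ?_
          rw [ofReal_norm, enorm_mul, enorm_eq_nnnorm, enorm_eq_nnnorm]
  · unfold dconv
    rw [tsum_eq_zero_of_not_summable hs]
    simp

/-- ENNReal Young inequality for the weighted ℓ¹ norm. -/
lemma NE_dconv_le (hr0 : 0 ≤ r) (hr2 : r ≤ 2) (u v : (Fin d → ℤ) → ℂ) :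
    ∑' K : Fin d → ℤ, (‖dconv d u v K‖₊ : ℝ≥0∞) * W d r K
      ≤ 2 * ((∑' K : Fin d → ℤ, (‖u K‖₊ : ℝ≥0∞) * W d r K)
          * ∑' K : Fin d → ℤ, (‖v K‖₊ : ℝ≥0∞) * W d r K) := by
  have hW : ∀ K L : Fin d → ℤ, W d r K ≤ 2 * (W d r (K - L) * W d r L) := by
    intro K L
    unfold W
    calc ENNReal.ofReal (wt d r K) ≤ ENNReal.ofReal (2 * (wt d r (K - L) * wt d r L)) :=
          ENNReal.ofReal_le_ofReal (wt_submul hr0 hr2 K L)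
      _ = 2 * (ENNReal.ofReal (wt d r (K - L)) * ENNReal.ofReal (wt d r L)) := by
          rw [ENNReal.ofReal_mul (by norm_num),
            ENNReal.ofReal_mul (wt_nonneg d r (K - L)), ENNReal.ofReal_ofNat]
  calc ∑' K : Fin d → ℤ, (‖dconv d u v K‖₊ : ℝ≥0∞) * W d r K
      ≤ ∑' K : Fin d → ℤ, (∑' L : Fin d → ℤ, (‖u (K - L)‖₊ : ℝ≥0∞) * ‖v L‖₊) * W d r K :=
        ENNReal.tsum_le_tsum fun K =>
          mul_le_mul_left (enorm_dconv_point_le u v K) _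
    _ = ∑' K : Fin d → ℤ, ∑' L : Fin d → ℤ, ((‖u (K - L)‖₊ : ℝ≥0∞) * ‖v L‖₊) * W d r K := by
        simp [ENNReal.tsum_mul_right]
    _ ≤ ∑' K : Fin d → ℤ, ∑' L : Fin d → ℤ,
          2 * (((‖u (K - L)‖₊ : ℝ≥0∞) * W d r (K - L)) * ((‖v L‖₊ : ℝ≥0∞) * W d r L)) := by
        refine ENNReal.tsum_le_tsum fun K => ENNReal.tsum_le_tsum fun L => ?_
        calc ((‖u (K - L)‖₊ : ℝ≥0∞) * ‖v L‖₊) * W d r K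
            ≤ ((‖u (K - L)‖₊ : ℝ≥0∞) * ‖v L‖₊) * (2 * (W d r (K - L) * W d r L)) :=
              mul_le_mul_right (hW K L) _
          _ = 2 * (((‖u (K - L)‖₊ : ℝ≥0∞) * W d r (K - L)) * ((‖v L‖₊ : ℝ≥0∞) * W d r L)) := by
              ring
    _ = 2 * ((∑' K : Fin d → ℤ, (‖u K‖₊ : ℝ≥0∞) * W d r K)
          * ∑' K : Fin d → ℤ, (‖v K‖₊ : ℝ≥0∞) * W d r K) := by
        rw [← key_conv_tsum (fun K => (‖u K‖₊ : ℝ≥0∞) * W d r K)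
          (fun L => (‖v L‖₊ : ℝ≥0∞) * W d r L)]
        simp_rw [ENNReal.tsum_mul_left]

end CritAux

namespace CritAux

variable {d : ℕ} {r : ℝ}

/-- real weighted ℓ¹ "norm" -/
noncomputable def Nr (d : ℕ) (r : ℝ) (u : (Fin d → ℤ) → ℂ) : ℝ :=
  ∑' K : Fin d → ℤ, ‖u K‖ * wt d r K

lemma Nr_nonneg (u : (Fin d → ℤ) → ℂ) : 0 ≤ Nr d r u :=
  tsum_nonneg fun K => mul_nonneg (norm_nonneg _) (wt_nonneg d r K)

/-- transfer to ENNReal -/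
lemma NE_eq_ofReal_Nr (u : (Fin d → ℤ) → ℂ)
    (hu : Summable fun K => ‖u K‖ * wt d r K) :
    ∑' K : Fin d → ℤ, (‖u K‖₊ : ℝ≥0∞) * W d r K = ENNReal.ofReal (Nr d r u) := by
  rw [Nr, ENNReal.ofReal_tsum_of_nonneg
    (fun K => mul_nonneg (norm_nonneg _) (wt_nonneg d r K)) hu]
  refine tsum_congr fun K => ?_
  rw [ENNReal.ofReal_mul (norm_nonneg _), ofReal_norm, enorm_eq_nnnorm, W]

lemma point_le_Nr (hr : 0 ≤ r) {u : (Fin d → ℤ) → ℂ}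
    (hu : Summable fun K => ‖u K‖ * wt d r K) (M : Fin d → ℤ) :
    ‖u M‖ ≤ Nr d r u := by
  have h1 : ‖u M‖ ≤ ‖u M‖ * wt d r M :=
    le_mul_of_one_le_right (norm_nonneg _) (one_le_wt hr M)
  exact h1.trans (Summable.le_tsum hu M fun K _ =>
    mul_nonneg (norm_nonneg _) (wt_nonneg d r K))

lemma inner_norm_summable (hr : 0 ≤ r) {u v : (Fin d → ℤ) → ℂ}
    (hu : Summable fun K => ‖u K‖ * wt d r K)
    (hv : Summable fun K => ‖v K‖ * wt d r K) (K : Fin d → ℤ) :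
    Summable fun L : Fin d → ℤ => ‖u (K - L) * v L‖ := by
  refine Summable.of_nonneg_of_le (fun _ => norm_nonneg _)
    (fun L => ?_) (hv.mul_left (Nr d r u))
  rw [norm_mul]
  have h1 : ‖u (K - L)‖ ≤ Nr d r u := point_le_Nr hr hu _
  have h2 : ‖v L‖ ≤ ‖v L‖ * wt d r L :=
    le_mul_of_one_le_right (norm_nonneg _) (one_le_wt hr L)
  exact mul_le_mul h1 h2 (norm_nonneg _) (Nr_nonneg u)

lemma inner_summable (hr : 0 ≤ r) {u v : (Fin d → ℤ) → ℂ}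
    (hu : Summable fun K => ‖u K‖ * wt d r K)
    (hv : Summable fun K => ‖v K‖ * wt d r K) (K : Fin d → ℤ) :
    Summable fun L : Fin d → ℤ => u (K - L) * v L :=
  (inner_norm_summable hr hu hv K).of_norm

lemma dconv_point_le (hr : 0 ≤ r) {u v : (Fin d → ℤ) → ℂ}
    (hu : Summable fun K => ‖u K‖ * wt d r K)
    (hv : Summable fun K => ‖v K‖ * wt d r K) (K : Fin d → ℤ) :
    ‖dconv d u v K‖ ≤ Nr d r u * Nr d r v := by
  have h1 : ‖dconv d u v K‖ ≤ ∑' L : Fin d → ℤ, ‖u (K - L) * v L‖ :=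
    norm_tsum_le_tsum_norm (inner_norm_summable hr hu hv K)
  refine h1.trans ?_
  have h2 : ∑' L : Fin d → ℤ, ‖u (K - L) * v L‖
      ≤ ∑' L : Fin d → ℤ, Nr d r u * (‖v L‖ * wt d r L) := by
    refine Summable.tsum_le_tsum (fun L => ?_) (inner_norm_summable hr hu hv K)
      (hv.mul_left (Nr d r u))
    rw [norm_mul]
    exact mul_le_mul (point_le_Nr hr hu _)
      (le_mul_of_one_le_right (norm_nonneg _) (one_le_wt hr L))
      (norm_nonneg _) (Nr_nonneg u)
  refine h2.trans ?_
  rw [tsum_mul_left, show (∑' L : Fin d → ℤ, ‖v L‖ * wt d r L) = Nr d r v from rfl]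

/-- real Young: summability of the weighted convolution and the norm bound -/
lemma dconv_summable (hr0 : 0 ≤ r) (hr2 : r ≤ 2) {u v : (Fin d → ℤ) → ℂ}
    (hu : Summable fun K => ‖u K‖ * wt d r K)
    (hv : Summable fun K => ‖v K‖ * wt d r K) :
    Summable (fun K => ‖dconv d u v K‖ * wt d r K) ∧
      Nr d r (dconv d u v) ≤ 2 * (Nr d r u * Nr d r v) := by
  have hE : ∑' K : Fin d → ℤ, (‖dconv d u v K‖₊ : ℝ≥0∞) * W d r K
      ≤ ENNReal.ofReal (2 * (Nr d r u * Nr d r v)) := by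
    refine (NE_dconv_le hr0 hr2 u v).trans ?_
    rw [NE_eq_ofReal_Nr u hu, NE_eq_ofReal_Nr v hv,
      ENNReal.ofReal_mul (by norm_num),
      ENNReal.ofReal_mul (Nr_nonneg u), ENNReal.ofReal_ofNat]
  have heq : ∀ K : Fin d → ℤ, (‖dconv d u v K‖₊ : ℝ≥0∞) * W d r K
      = ENNReal.ofReal (‖dconv d u v K‖ * wt d r K) := by
    intro K
    rw [ENNReal.ofReal_mul (norm_nonneg _), ofReal_norm, enorm_eq_nnnorm, W]
  have hne : ∑' K : Fin d → ℤ, ENNReal.ofReal (‖dconv d u v K‖ * wt d r K) ≠ ⊤ := by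
    rw [← tsum_congr heq]
    exact (hE.trans_lt ENNReal.ofReal_lt_top).ne
  have hsum : Summable (fun K => ‖dconv d u v K‖ * wt d r K) := by
    have h := ENNReal.summable_toReal hne
    refine h.congr fun K => ?_
    rw [ENNReal.toReal_ofReal (mul_nonneg (norm_nonneg _) (wt_nonneg d r K))]
  refine ⟨hsum, ?_⟩
  have h2 : ENNReal.ofReal (Nr d r (dconv d u v))
      ≤ ENNReal.ofReal (2 * (Nr d r u * Nr d r v)) := by
    rw [Nr, ENNReal.ofReal_tsum_of_nonneg
      (fun K => mul_nonneg (norm_nonneg _) (wt_nonneg d r K)) hsum, ← tsum_congr heq]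
    exact hE
  have hpos : 0 ≤ 2 * (Nr d r u * Nr d r v) := by
    have := Nr_nonneg (d := d) (r := r) u
    have := Nr_nonneg (d := d) (r := r) v
    positivity
  exact (ENNReal.ofReal_le_ofReal_iff hpos).mp h2

/-- left linearity at a point -/
lemma dconv_sub_left (hr : 0 ≤ r) {u v w : (Fin d → ℤ) → ℂ}
    (hu : Summable fun K => ‖u K‖ * wt d r K)
    (hv : Summable fun K => ‖v K‖ * wt d r K)
    (hw : Summable fun K => ‖w K‖ * wt d r K) (K : Fin d → ℤ) :
    dconv d u w K - dconv d v w K = dconv d (fun M => u M - v M) w K := by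
  unfold dconv
  rw [← Summable.tsum_sub (inner_summable hr hu hw K) (inner_summable hr hv hw K)]
  exact tsum_congr fun L => by ring

lemma dconv_sub_right (hr : 0 ≤ r) {u v w : (Fin d → ℤ) → ℂ}
    (hu : Summable fun K => ‖u K‖ * wt d r K)
    (hv : Summable fun K => ‖v K‖ * wt d r K)
    (hw : Summable fun K => ‖w K‖ * wt d r K) (K : Fin d → ℤ) :
    dconv d u v K - dconv d u w K = dconv d u (fun M => v M - w M) K := by
  unfold dconv
  rw [← Summable.tsum_sub (inner_summable hr hu hv K) (inner_summable hr hu hw K)]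
  exact tsum_congr fun L => by ring

lemma dconv_add_left (hr : 0 ≤ r) {p q w : (Fin d → ℤ) → ℂ}
    (hp : Summable fun K => ‖p K‖ * wt d r K)
    (hq : Summable fun K => ‖q K‖ * wt d r K)
    (hw : Summable fun K => ‖w K‖ * wt d r K) (K : Fin d → ℤ) :
    dconv d (fun M => p M + q M) w K = dconv d p w K + dconv d q w K := by
  unfold dconv
  rw [← Summable.tsum_add (inner_summable hr hp hw K) (inner_summable hr hq hw K)]
  exact tsum_congr fun L => by ring

lemma sub_summable (hr : 0 ≤ r) {u v : (Fin d → ℤ) → ℂ}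
    (hu : Summable fun K => ‖u K‖ * wt d r K)
    (hv : Summable fun K => ‖v K‖ * wt d r K) :
    Summable fun K => ‖u K - v K‖ * wt d r K := by
  refine Summable.of_nonneg_of_le
    (fun K => mul_nonneg (norm_nonneg _) (wt_nonneg d r K)) (fun K => ?_) (hu.add hv)
  have h := norm_sub_le (u K) (v K)
  have := wt_nonneg d r K
  nlinarith

end CritAux

namespace CritAux

variable {d : ℕ} {r : ℝ}

lemma conv3_continuousOn (hr0 : 0 ≤ r) (hr2 : r ≤ 2) {T₀ CA : ℝ} (hCA : 0 < CA)
    (A : ℝ → (Fin d → ℤ) → ℂ)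
    (hcont : NormContOn d r T₀ A)
    (hsum : ∀ T ∈ Set.Icc (0 : ℝ) T₀, Summable (fun K => ‖A T K‖ * wt d r K))
    (hbd : ∀ T ∈ Set.Icc (0 : ℝ) T₀, ∑' K : Fin d → ℤ, ‖A T K‖ * wt d r K ≤ CA)
    (K : Fin d → ℤ) :
    ContinuousOn (fun T => dconv d (dconv d (A T) (A T)) (A T) K) (Set.Icc (0 : ℝ) T₀) := by
  rw [Metric.continuousOn_iff]
  intro T hT η hη
  have hden : (0:ℝ) < 6 * CA ^ 2 + 1 := by positivity
  obtain ⟨ν, hν, hν'⟩ := hcont T hT (η / (6 * CA ^ 2 + 1)) (by positivity)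
  refine ⟨ν, hν, fun T' hT' hdist => ?_⟩
  rw [Real.dist_eq] at hdist
  have hD := hν' T' hT' hdist
  set u := A T' with hu_def
  set v := A T with hv_def
  have Su : Summable fun M => ‖u M‖ * wt d r M := hsum T' hT'
  have Sv : Summable fun M => ‖v M‖ * wt d r M := hsum T hT
  set e : (Fin d → ℤ) → ℂ := fun M => u M - v M with he_def
  have Se : Summable fun M => ‖e M‖ * wt d r M := sub_summable hr0 Su Sv
  have hNuCA : Nr d r u ≤ CA := hbd T' hT'
  have hNvCA : Nr d r v ≤ CA := hbd T hT
  have hNu0 : 0 ≤ Nr d r u := Nr_nonneg u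
  have hNv0 : 0 ≤ Nr d r v := Nr_nonneg v
  have hNe0 : 0 ≤ Nr d r e := Nr_nonneg e
  have hNeD : Nr d r e < η / (6 * CA ^ 2 + 1) := hD
  -- convolutions
  have Sp : Summable fun M => ‖dconv d u u M‖ * wt d r M := (dconv_summable hr0 hr2 Su Su).1
  have Sp' : Summable fun M => ‖dconv d v v M‖ * wt d r M := (dconv_summable hr0 hr2 Sv Sv).1
  have Sq1 : Summable fun M => ‖dconv d e u M‖ * wt d r M := (dconv_summable hr0 hr2 Se Su).1
  have Sq2 : Summable fun M => ‖dconv d v e M‖ * wt d r M := (dconv_summable hr0 hr2 Sv Se).1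
  have hNp : Nr d r (dconv d u u) ≤ 2 * (Nr d r u * Nr d r u) := (dconv_summable hr0 hr2 Su Su).2
  have hNq1 : Nr d r (dconv d e u) ≤ 2 * (Nr d r e * Nr d r u) := (dconv_summable hr0 hr2 Se Su).2
  have hNq2 : Nr d r (dconv d v e) ≤ 2 * (Nr d r v * Nr d r e) := (dconv_summable hr0 hr2 Sv Se).2
  -- decompose the difference
  have hterm1 : dconv d (dconv d u u) u K - dconv d (dconv d u u) v K
      = dconv d (dconv d u u) e K := dconv_sub_right hr0 Sp Su Sv K
  have hpp' : (fun M => dconv d u u M - dconv d v v M)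
      = fun M => dconv d e u M + dconv d v e M := by
    funext M
    have h1 : dconv d u u M - dconv d v u M = dconv d e u M := dconv_sub_left hr0 Su Sv Su M
    have h2 : dconv d v u M - dconv d v v M = dconv d v e M := dconv_sub_right hr0 Sv Su Sv M
    rw [← h1, ← h2]; ring
  have hterm2 : dconv d (dconv d u u) v K - dconv d (dconv d v v) v K
      = dconv d (dconv d e u) v K + dconv d (dconv d v e) v K := by
    rw [dconv_sub_left hr0 Sp Sp' Sv K, hpp', dconv_add_left hr0 Sq1 Sq2 Sv K]
  -- norm bounds
  have hb1 : ‖dconv d (dconv d u u) e K‖ ≤ Nr d r (dconv d u u) * Nr d r e :=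
    dconv_point_le hr0 Sp Se K
  have hb2 : ‖dconv d (dconv d e u) v K‖ ≤ Nr d r (dconv d e u) * Nr d r v :=
    dconv_point_le hr0 Sq1 Sv K
  have hb3 : ‖dconv d (dconv d v e) v K‖ ≤ Nr d r (dconv d v e) * Nr d r v :=
    dconv_point_le hr0 Sq2 Sv K
  rw [dist_eq_norm]
  have hsplit : dconv d (dconv d u u) u K - dconv d (dconv d v v) v K
      = dconv d (dconv d u u) e K
        + (dconv d (dconv d e u) v K + dconv d (dconv d v e) v K) := by
    rw [← hterm1, ← hterm2]; ring
  rw [hsplit]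
  have htri : ‖dconv d (dconv d u u) e K
        + (dconv d (dconv d e u) v K + dconv d (dconv d v e) v K)‖
      ≤ ‖dconv d (dconv d u u) e K‖ + ‖dconv d (dconv d e u) v K‖
        + ‖dconv d (dconv d v e) v K‖ := by
    calc _ ≤ ‖dconv d (dconv d u u) e K‖
          + ‖dconv d (dconv d e u) v K + dconv d (dconv d v e) v K‖ := norm_add_le _ _
      _ ≤ _ := by
          have := norm_add_le (dconv d (dconv d e u) v K) (dconv d (dconv d v e) v K)
          linarith
  have hD' : Nr d r e ≤ η / (6 * CA ^ 2 + 1) := le_of_lt hNeD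
  have key : ‖dconv d (dconv d u u) e K‖ + ‖dconv d (dconv d e u) v K‖
      + ‖dconv d (dconv d v e) v K‖ ≤ 6 * CA ^ 2 * Nr d r e := by
    have hNp' : Nr d r (dconv d u u) ≤ 2 * CA ^ 2 := by nlinarith
    have hNq1' : Nr d r (dconv d e u) ≤ 2 * CA * Nr d r e := by nlinarith
    have hNq2' : Nr d r (dconv d v e) ≤ 2 * CA * Nr d r e := by nlinarith
    have c1 : ‖dconv d (dconv d u u) e K‖ ≤ 2 * CA ^ 2 * Nr d r e :=
      hb1.trans (mul_le_mul_of_nonneg_right hNp' hNe0)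
    have c2 : ‖dconv d (dconv d e u) v K‖ ≤ 2 * CA ^ 2 * Nr d r e := by
      have h := mul_le_mul hNq1' hNvCA hNv0 (by positivity)
      refine (hb2.trans h).trans (le_of_eq ?_)
      ring
    have c3 : ‖dconv d (dconv d v e) v K‖ ≤ 2 * CA ^ 2 * Nr d r e := by
      have h := mul_le_mul hNq2' hNvCA hNv0 (by positivity)
      refine (hb3.trans h).trans (le_of_eq ?_)
      ring
    linarith
  have hfin : 6 * CA ^ 2 * Nr d r e < η := by
    have h1 : 6 * CA ^ 2 * Nr d r e ≤ 6 * CA ^ 2 * (η / (6 * CA ^ 2 + 1)) := by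
      nlinarith
    have h2 : 6 * CA ^ 2 * (η / (6 * CA ^ 2 + 1)) < η := by
      rw [← mul_div_assoc, div_lt_iff₀ hden]
      nlinarith
    linarith
  linarith [htri, key, hfin]

end CritAux

/-- the critical-mode Duhamel contribution of the cubic residual
term `ε³A³e^{3ix₁}` (wave vectors `k = 3e₁ + εK` with `|k − e₁| ≤ 1/10`, i.e.
`|εK + 2e₁| ≤ 1/10`) is `O(ε^{2−δ})` on `[0, T₀/ε²]`, for `Â ∈ ℓ¹_{1−δ}`. -/
theorem critical_cubic_residual (d : ℕ) (hd : 0 < d)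
    (δ T₀ CA : ℝ) (hδ0 : 0 < δ) (hδ1 : δ < 1) (hT₀ : 0 < T₀) (hCA : 0 < CA) :
    ∃ C > 0, ∃ ε₀ ∈ Set.Ioc (0 : ℝ) 1, ∀ ε ∈ Set.Ioc (0 : ℝ) ε₀,
      ∀ A : ℝ → (Fin d → ℤ) → ℂ,
        NormContOn d (1 - δ) T₀ A →
        (∀ T ∈ Set.Icc (0 : ℝ) T₀, Summable (fun K => ‖A T K‖ * wt d (1 - δ) K)) →
        (∀ T ∈ Set.Icc (0 : ℝ) T₀, ∑' K : Fin d → ℤ, ‖A T K‖ * wt d (1 - δ) K ≤ CA) →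
        ∀ t ∈ Set.Icc (0 : ℝ) (T₀ / ε ^ 2),
          ε ^ 3 * (∑' K : Fin d → ℤ,
            if Real.sqrt (∑ i, (ε * (K i : ℝ)
                + if i = (⟨0, hd⟩ : Fin d) then 2 else 0) ^ 2) ≤ 1 / 10 then
              ‖∫ τ in (0 : ℝ)..t,
                (Real.exp ((-(1 - (3 + ε * (K ⟨0, hd⟩ : ℝ)) ^ 2) ^ 2
                      - 4 * ∑ i ∈ Finset.univ.filter (fun i => i ≠ (⟨0, hd⟩ : Fin d)),
                          (ε * (K i : ℝ)) ^ 2) * (t - τ))) •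
                  dconv d (dconv d (A (ε ^ 2 * τ)) (A (ε ^ 2 * τ))) (A (ε ^ 2 * τ)) K‖
            else 0) ≤ C * ε ^ ((2 : ℝ) - δ) := by
  classical
  have hr0 : (0:ℝ) ≤ 1 - δ := by linarith
  have hr2 : (1:ℝ) - δ ≤ 2 := by linarith
  refine ⟨4 * CA ^ 3 * T₀, by positivity, 1, ⟨zero_lt_one, le_refl 1⟩, ?_⟩
  rintro ε ⟨hε0, hε1⟩ A hcont hsum hbd t ⟨ht0, htT⟩
  set i0 : Fin d := ⟨0, hd⟩ with hi0
  set F : (Fin d → ℤ) → ℝ → ℂ := fun K τ =>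
    dconv d (dconv d (A (ε ^ 2 * τ)) (A (ε ^ 2 * τ))) (A (ε ^ 2 * τ)) K with hF
  set lam : (Fin d → ℤ) → ℝ := fun K =>
    -(1 - (3 + ε * (K i0 : ℝ)) ^ 2) ^ 2
      - 4 * ∑ i ∈ Finset.univ.filter (fun i => i ≠ i0), (ε * (K i : ℝ)) ^ 2 with hlam
  set g : (Fin d → ℤ) → ℝ := fun K =>
    if Real.sqrt (∑ i, (ε * (K i : ℝ) + if i = i0 then 2 else 0) ^ 2) ≤ 1 / 10 then
      ‖∫ τ in (0:ℝ)..t, (Real.exp (lam K * (t - τ))) • F K τ‖ else 0 with hg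
  have hε2 : (0:ℝ) < ε ^ 2 := by positivity
  -- τ ∈ Ioc 0 t implies the slow time is in [0, T₀]
  have hmem : ∀ τ ∈ Set.Ioc (0:ℝ) t, ε ^ 2 * τ ∈ Set.Icc (0:ℝ) T₀ := by
    rintro τ ⟨hτ0, hτt⟩
    constructor
    · positivity
    · have h1 : ε ^ 2 * τ ≤ ε ^ 2 * (T₀ / ε ^ 2) :=
        mul_le_mul_of_nonneg_left (hτt.trans htT) (le_of_lt hε2)
      have h2 : ε ^ 2 * (T₀ / ε ^ 2) = T₀ := by field_simp
      linarith
  -- the ℓ¹-bound on the cubed convolution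
  have hWsum : ∀ τ ∈ Set.Ioc (0:ℝ) t,
      ∑' K : Fin d → ℤ, (‖F K τ‖₊ : ℝ≥0∞) * CritAux.W d (1 - δ) K
        ≤ ENNReal.ofReal (4 * CA ^ 3) := by
    intro τ hτ
    have hm := hmem τ hτ
    have S := hsum _ hm
    have B := hbd _ hm
    have h3 : ∑' K : Fin d → ℤ, (‖A (ε ^ 2 * τ) K‖₊ : ℝ≥0∞) * CritAux.W d (1 - δ) K
        ≤ ENNReal.ofReal CA := by
      rw [CritAux.NE_eq_ofReal_Nr _ S]
      exact ENNReal.ofReal_le_ofReal B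
    have hAA : ∑' K : Fin d → ℤ,
        (‖dconv d (A (ε ^ 2 * τ)) (A (ε ^ 2 * τ)) K‖₊ : ℝ≥0∞) * CritAux.W d (1 - δ) K
          ≤ ENNReal.ofReal (2 * CA ^ 2) := by
      refine (CritAux.NE_dconv_le hr0 hr2 _ _).trans ?_
      calc 2 * ((∑' K : Fin d → ℤ, (‖A (ε ^ 2 * τ) K‖₊ : ℝ≥0∞) * CritAux.W d (1 - δ) K)
            * ∑' K : Fin d → ℤ, (‖A (ε ^ 2 * τ) K‖₊ : ℝ≥0∞) * CritAux.W d (1 - δ) K)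
          ≤ 2 * (ENNReal.ofReal CA * ENNReal.ofReal CA) :=
            mul_le_mul_right (mul_le_mul' h3 h3) 2
        _ = ENNReal.ofReal (2 * CA ^ 2) := by
            rw [show (2 * CA ^ 2 : ℝ) = 2 * (CA * CA) by ring,
              ENNReal.ofReal_mul (by norm_num), ENNReal.ofReal_mul hCA.le,
              ENNReal.ofReal_ofNat]
    refine (CritAux.NE_dconv_le hr0 hr2 _ _).trans ?_
    calc 2 * ((∑' K : Fin d → ℤ,
          (‖dconv d (A (ε ^ 2 * τ)) (A (ε ^ 2 * τ)) K‖₊ : ℝ≥0∞) * CritAux.W d (1 - δ) K)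
            * ∑' K : Fin d → ℤ, (‖A (ε ^ 2 * τ) K‖₊ : ℝ≥0∞) * CritAux.W d (1 - δ) K)
        ≤ 2 * (ENNReal.ofReal (2 * CA ^ 2) * ENNReal.ofReal CA) :=
          mul_le_mul_right (mul_le_mul' hAA h3) 2
      _ = ENNReal.ofReal (4 * CA ^ 3) := by
          have h4 : ENNReal.ofReal (4 * CA ^ 3)
              = 2 * (ENNReal.ofReal (2 * CA ^ 2) * ENNReal.ofReal CA) := by
            rw [show (4 * CA ^ 3 : ℝ) = 2 * (2 * CA ^ 2 * CA) by ring,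
              ENNReal.ofReal_mul (p := 2) (by norm_num),
              ENNReal.ofReal_mul (p := 2 * CA ^ 2) (by positivity),
              ENNReal.ofReal_ofNat]
          exact h4.symm
  -- measurability
  have hmeas : ∀ K : Fin d → ℤ, AEMeasurable
      (fun τ => (‖F K τ‖₊ : ℝ≥0∞) * CritAux.W d (1 - δ) K)
      (MeasureTheory.volume.restrict (Set.Ioc (0:ℝ) t)) := by
    intro K
    have hcont3 := CritAux.conv3_continuousOn hr0 hr2 hCA A hcont hsum hbd K
    have hmap : Set.MapsTo (fun τ : ℝ => ε ^ 2 * τ) (Set.Ioc 0 t) (Set.Icc 0 T₀) :=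
      fun τ hτ => hmem τ hτ
    have hc : ContinuousOn (fun τ => F K τ) (Set.Ioc (0:ℝ) t) :=
      hcont3.comp ((continuous_const.mul continuous_id).continuousOn) hmap
    exact ((hc.aemeasurable measurableSet_Ioc).enorm).mul_const _
  -- Step 1: lower bound on the weight in the support of the critical filter
  have step1 : ∀ K : Fin d → ℤ,
      Real.sqrt (∑ i, (ε * (K i : ℝ) + if i = i0 then 2 else 0) ^ 2) ≤ 1 / 10 →
      1 ≤ ε ^ ((1:ℝ) - δ) * wt d (1 - δ) K := by
    intro K hK
    have hsumnn : (0:ℝ) ≤ ∑ i, (ε * (K i : ℝ) + if i = i0 then 2 else 0) ^ 2 := by positivity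
    have h100 : ∑ i, (ε * (K i : ℝ) + if i = i0 then 2 else 0) ^ 2 ≤ 1/100 := by
      have h := Real.sq_sqrt hsumnn
      nlinarith [Real.sqrt_nonneg (∑ i, (ε * (K i : ℝ) + if i = i0 then 2 else 0) ^ 2)]
    have hterm : (ε * (K i0 : ℝ) + 2) ^ 2 ≤ 1/100 := by
      have hle := Finset.single_le_sum
        (f := fun i => (ε * (K i : ℝ) + if i = i0 then 2 else 0) ^ 2)
        (fun i _ => by positivity) (Finset.mem_univ i0)
      simpa using hle.trans h100
    have hx : 1 ≤ ε ^ 2 * (K i0 : ℝ) ^ 2 := by nlinarith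
    have hKsq : 1 / ε ^ 2 ≤ (K i0 : ℝ) ^ 2 := by
      rw [div_le_iff₀ hε2, mul_comm]
      linarith
    have hbase : 1 / ε ^ 2 ≤ 1 + ∑ i, ((K i : ℝ)) ^ 2 := by
      have hle : ((K i0 : ℝ)) ^ 2 ≤ ∑ i, ((K i : ℝ)) ^ 2 := by
        simpa using Finset.single_le_sum (f := fun i => ((K i : ℝ)) ^ 2)
          (fun i _ => by positivity) (Finset.mem_univ i0)
      linarith
    have hwt : (1 / ε ^ 2 : ℝ) ^ (((1:ℝ) - δ)/2) ≤ wt d (1 - δ) K :=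
      Real.rpow_le_rpow (by positivity) hbase (by linarith)
    have hpow : (1 / ε ^ 2 : ℝ) ^ (((1:ℝ) - δ)/2) = (ε ^ ((1:ℝ) - δ))⁻¹ := by
      rw [show (1 / ε ^ 2 : ℝ) = ε ^ (-2 : ℝ) by
        rw [Real.rpow_neg hε0.le, ← Real.rpow_natCast ε 2]; norm_num,
        ← Real.rpow_mul hε0.le, show (-2:ℝ) * (((1:ℝ) - δ)/2) = -((1:ℝ) - δ) by ring,
        Real.rpow_neg hε0.le]
    have hεr : (0:ℝ) < ε ^ ((1:ℝ) - δ) := Real.rpow_pos_of_pos hε0 _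
    calc (1:ℝ) = ε ^ ((1:ℝ) - δ) * (ε ^ ((1:ℝ) - δ))⁻¹ := (mul_inv_cancel₀ hεr.ne').symm
      _ ≤ ε ^ ((1:ℝ) - δ) * wt d (1 - δ) K := by
          rw [← hpow]
          exact mul_le_mul_of_nonneg_left hwt hεr.le
  -- the exponential factor is at most 1
  have hexp : ∀ (K : Fin d → ℤ), ∀ τ ∈ Set.Ioc (0:ℝ) t,
      Real.exp (lam K * (t - τ)) ≤ 1 := by
    rintro K τ ⟨hτ0, hτt⟩
    rw [Real.exp_le_one_iff]
    have h1 : (0:ℝ) ≤ ∑ i ∈ Finset.univ.filter (fun i => i ≠ i0), (ε * (K i : ℝ)) ^ 2 :=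
      Finset.sum_nonneg fun i _ => sq_nonneg _
    have h2 : lam K ≤ 0 := by
      rw [hlam]
      dsimp only
      nlinarith [sq_nonneg (1 - (3 + ε * (K i0 : ℝ)) ^ 2)]
    nlinarith
  -- the per-K bound
  have perK : ∀ K : Fin d → ℤ, ENNReal.ofReal (g K)
      ≤ ENNReal.ofReal (ε ^ ((1:ℝ) - δ)) *
        ∫⁻ τ in Set.Ioc (0:ℝ) t, (‖F K τ‖₊ : ℝ≥0∞) * CritAux.W d (1 - δ) K := by
    intro K
    by_cases hK : Real.sqrt (∑ i, (ε * (K i : ℝ) + if i = i0 then 2 else 0) ^ 2) ≤ 1 / 10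
    · rw [hg]
      dsimp only
      rw [if_pos hK, intervalIntegral.integral_of_le ht0]
      calc ENNReal.ofReal ‖∫ τ in Set.Ioc (0:ℝ) t, Real.exp (lam K * (t - τ)) • F K τ‖
          = (‖∫ τ in Set.Ioc (0:ℝ) t, Real.exp (lam K * (t - τ)) • F K τ‖₊ : ℝ≥0∞) :=
            ofReal_norm _
        _ ≤ ∫⁻ τ in Set.Ioc (0:ℝ) t, (‖Real.exp (lam K * (t - τ)) • F K τ‖₊ : ℝ≥0∞) :=
            MeasureTheory.enorm_integral_le_lintegral_enorm _
        _ ≤ ∫⁻ τ in Set.Ioc (0:ℝ) t, (‖F K τ‖₊ : ℝ≥0∞) := by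
            refine MeasureTheory.lintegral_mono_ae ?_
            filter_upwards [MeasureTheory.ae_restrict_mem measurableSet_Ioc] with τ hτ
            rw [← enorm_eq_nnnorm, ← enorm_eq_nnnorm, ← ofReal_norm, ← ofReal_norm]
            refine ENNReal.ofReal_le_ofReal ?_
            rw [norm_smul, Real.norm_eq_abs, abs_of_pos (Real.exp_pos _)]
            exact mul_le_of_le_one_left (norm_nonneg _) (hexp K τ hτ)
        _ ≤ ENNReal.ofReal (ε ^ ((1:ℝ) - δ)) *
            ∫⁻ τ in Set.Ioc (0:ℝ) t, (‖F K τ‖₊ : ℝ≥0∞) * CritAux.W d (1 - δ) K := by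
            rw [MeasureTheory.lintegral_mul_const' _ _
              (show CritAux.W d (1 - δ) K ≠ ⊤ from ENNReal.ofReal_ne_top)]
            calc ∫⁻ τ in Set.Ioc (0:ℝ) t, (‖F K τ‖₊ : ℝ≥0∞)
                = 1 * ∫⁻ τ in Set.Ioc (0:ℝ) t, (‖F K τ‖₊ : ℝ≥0∞) := (one_mul _).symm
              _ ≤ (ENNReal.ofReal (ε ^ ((1:ℝ) - δ)) * CritAux.W d (1 - δ) K) *
                  ∫⁻ τ in Set.Ioc (0:ℝ) t, (‖F K τ‖₊ : ℝ≥0∞) := by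
                  refine mul_le_mul_left ?_ _
                  calc (1:ℝ≥0∞) = ENNReal.ofReal 1 := by simp
                    _ ≤ ENNReal.ofReal (ε ^ ((1:ℝ) - δ) * wt d (1 - δ) K) :=
                        ENNReal.ofReal_le_ofReal (step1 K hK)
                    _ = ENNReal.ofReal (ε ^ ((1:ℝ) - δ)) * CritAux.W d (1 - δ) K := by
                        rw [ENNReal.ofReal_mul (Real.rpow_nonneg hε0.le _)]; rfl
              _ = ENNReal.ofReal (ε ^ ((1:ℝ) - δ)) *
                  ((∫⁻ τ in Set.Ioc (0:ℝ) t, (‖F K τ‖₊ : ℝ≥0∞)) * CritAux.W d (1 - δ) K) := by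
                  ring
    · rw [hg]
      dsimp only
      rw [if_neg hK, ENNReal.ofReal_zero]
      positivity
  -- sum the per-K bounds
  have key : ∑' K : Fin d → ℤ, ENNReal.ofReal (g K)
      ≤ ENNReal.ofReal (ε ^ ((1:ℝ) - δ) * (4 * CA ^ 3 * t)) := by
    calc ∑' K : Fin d → ℤ, ENNReal.ofReal (g K)
        ≤ ∑' K : Fin d → ℤ, ENNReal.ofReal (ε ^ ((1:ℝ) - δ)) *
            ∫⁻ τ in Set.Ioc (0:ℝ) t, (‖F K τ‖₊ : ℝ≥0∞) * CritAux.W d (1 - δ) K :=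
          ENNReal.tsum_le_tsum perK
      _ = ENNReal.ofReal (ε ^ ((1:ℝ) - δ)) * ∑' K : Fin d → ℤ,
            ∫⁻ τ in Set.Ioc (0:ℝ) t, (‖F K τ‖₊ : ℝ≥0∞) * CritAux.W d (1 - δ) K :=
          ENNReal.tsum_mul_left
      _ = ENNReal.ofReal (ε ^ ((1:ℝ) - δ)) *
            ∫⁻ τ in Set.Ioc (0:ℝ) t, ∑' K : Fin d → ℤ,
              (‖F K τ‖₊ : ℝ≥0∞) * CritAux.W d (1 - δ) K := by
          rw [MeasureTheory.lintegral_tsum hmeas]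
      _ ≤ ENNReal.ofReal (ε ^ ((1:ℝ) - δ)) *
            ∫⁻ _ in Set.Ioc (0:ℝ) t, ENNReal.ofReal (4 * CA ^ 3) := by
          refine mul_le_mul_right (MeasureTheory.lintegral_mono_ae ?_) _
          filter_upwards [MeasureTheory.ae_restrict_mem measurableSet_Ioc] with τ hτ
          exact hWsum τ hτ
      _ = ENNReal.ofReal (ε ^ ((1:ℝ) - δ)) * (ENNReal.ofReal (4 * CA ^ 3) *
            ENNReal.ofReal t) := by
          rw [MeasureTheory.setLIntegral_const, Real.volume_Ioc, sub_zero]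
      _ = ENNReal.ofReal (ε ^ ((1:ℝ) - δ) * (4 * CA ^ 3 * t)) := by
          rw [ENNReal.ofReal_mul (p := ε ^ ((1:ℝ) - δ)) (Real.rpow_nonneg hε0.le _),
            ENNReal.ofReal_mul (p := 4 * CA ^ 3) (by positivity)]
  -- back to the reals
  have hg0 : ∀ K : Fin d → ℤ, 0 ≤ g K := by
    intro K
    rw [hg]
    dsimp only
    split_ifs
    · exact norm_nonneg _
    · exact le_rfl
  have hfinal : (∑' K : Fin d → ℤ, g K) ≤ ε ^ ((1:ℝ) - δ) * (4 * CA ^ 3 * t) := by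
    by_cases hs : Summable g
    · have heq := ENNReal.ofReal_tsum_of_nonneg hg0 hs
      rw [← heq] at key
      exact (ENNReal.ofReal_le_ofReal_iff (by positivity)).mp key
    · rw [tsum_eq_zero_of_not_summable hs]
      positivity
  -- final arithmetic
  have harith : ε ^ 3 * (ε ^ ((1:ℝ) - δ) * (4 * CA ^ 3 * t))
      ≤ 4 * CA ^ 3 * T₀ * ε ^ ((2:ℝ) - δ) := by
    have hεr : ε ^ (3:ℕ) * ε ^ ((1:ℝ) - δ) = ε ^ ((2:ℝ) - δ) * ε ^ (2:ℕ) := by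
      rw [← Real.rpow_natCast ε 3, ← Real.rpow_natCast ε 2, ← Real.rpow_add hε0,
        ← Real.rpow_add hε0]
      congr 1
      ring
    calc ε ^ 3 * (ε ^ ((1:ℝ) - δ) * (4 * CA ^ 3 * t))
        = (ε ^ 3 * ε ^ ((1:ℝ) - δ)) * (4 * CA ^ 3 * t) := by ring
      _ = ε ^ ((2:ℝ) - δ) * (ε ^ 2 * (4 * CA ^ 3 * t)) := by rw [hεr]; ring
      _ ≤ ε ^ ((2:ℝ) - δ) * (ε ^ 2 * (4 * CA ^ 3 * (T₀ / ε ^ 2))) := by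
          refine mul_le_mul_of_nonneg_left ?_ (Real.rpow_nonneg hε0.le _)
          refine mul_le_mul_of_nonneg_left ?_ hε2.le
          exact mul_le_mul_of_nonneg_left htT (by positivity)
      _ = 4 * CA ^ 3 * T₀ * ε ^ ((2:ℝ) - δ) := by field_simp
  calc ε ^ 3 * ∑' K : Fin d → ℤ, g K
      ≤ ε ^ 3 * (ε ^ ((1:ℝ) - δ) * (4 * CA ^ 3 * t)) :=
        mul_le_mul_of_nonneg_left hfinal (by positivity)
    _ ≤ 4 * CA ^ 3 * T₀ * ε ^ ((2:ℝ) - δ) := harith
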